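/- For arbitrarily large n there exists a binary tree T on n vertices such that bfsw(T)/bfsw_min(T) ≥ (log₂(n/3) + 2)/2; in particular the ratio bfsw(T)/bfsw_min(T) is Ω(log n). -/

import Mathlib

open SimpleGraph

/-- Number of vertices at distance exactly `i` from `v`. -/
noncomputable def layerCard {V : Type*} (G : SimpleGraph V) (v : V) (i : ℕ) : ℕ :=
  ({u : V | G.dist v u = i}).ncard

/-- BFS width of `G` from root `v`: the maximum layer size. -/
noncomputable def bfswFrom {V : Type*} (G : SimpleGraph V) (v : V) : ℕ :=
  sSup (Set.range (layerCard G v))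

/-- BFS width of `G`: maximum over roots. -/
noncomputable def bfsw {V : Type*} (G : SimpleGraph V) : ℕ :=
  sSup (Set.range (bfswFrom G))

/-- Minimum BFS width of `G`: minimum over roots. -/
noncomputable def bfswMin {V : Type*} (G : SimpleGraph V) : ℕ :=
  sInf (Set.range (bfswFrom G))

/-- Bandwidth of `G`: least `b` such that some linear layout has all edges of length `≤ b`. -/
noncomputable def bw {V : Type*} [Fintype V] (G : SimpleGraph V) : ℕ :=
  sInf { b : ℕ | ∃ f : V ≃ Fin (Fintype.card V),
    ∀ u w : V, G.Adj u w → ((f u : ℤ) - (f w : ℤ)).natAbs ≤ b }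


namespace BTaux

/-- parent function on codes `0..3*2^j-1`: spine `0..2^j`, pendant `i` occupies
`2^j + 2^i .. 2^j + 2^(i+1) - 1`. -/
def p (j k : ℕ) : ℕ :=
  if k = 0 then 0
  else if k ≤ 2^j then k - 1
  else if k - 2^j = 2 ^ Nat.log 2 (k - 2^j) then 2^j - (k - 2^j)
  else k - 1

/-- distance from vertex `2^j` (good root). -/
def gg (j k : ℕ) : ℕ := if k ≤ 2^j then 2^j - k else k - 2^j + 1

/-- distance from vertex `0` (bad root). -/
def ff (j k : ℕ) : ℕ := if k ≤ 2^j then k else k + 1 - 2 ^ (Nat.log 2 (k - 2^j) + 1)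

lemma p_le (j k : ℕ) : p j k ≤ k := by
  unfold p
  split_ifs with h1 h2 h3 <;> omega

lemma p_lt (j : ℕ) {k : ℕ} (hk : k ≠ 0) : p j k < k := by
  unfold p
  split_ifs with h1 h2 h3 <;> omega

/-- basic facts about the pendant region -/
lemma pend_facts {j k : ℕ} (h1 : 2^j < k) (h2 : k < 3 * 2^j) :
    2 ^ Nat.log 2 (k - 2^j) ≤ k - 2^j ∧ k - 2^j < 2 ^ (Nat.log 2 (k - 2^j) + 1) ∧
    2 ^ Nat.log 2 (k - 2^j) ≤ 2^j := by
  have hne : k - 2^j ≠ 0 := by omega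
  refine ⟨Nat.pow_log_le_self 2 hne, Nat.lt_pow_succ_log_self one_lt_two _, ?_⟩
  have hlt : k - 2^j < 2 ^ (j + 1) := by
    have : 2 ^ (j+1) = 2 * 2^j := by ring
    omega
  have := Nat.log_lt_of_lt_pow hne hlt
  exact Nat.pow_le_pow_right (by norm_num) (by omega)

lemma ff_drop {j k : ℕ} (h0 : k ≠ 0) (hn : k < 3 * 2^j) : ff j (p j k) + 1 = ff j k := by
  by_cases h1 : k ≤ 2^j
  · have hp : p j k = k - 1 := by unfold p; rw [if_neg h0, if_pos h1]
    rw [hp]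
    unfold ff
    rw [if_pos (show k - 1 ≤ 2^j by omega), if_pos h1]
    omega
  · obtain ⟨hA, hB, hC⟩ := pend_facts (by omega) hn
    by_cases h3 : k - 2^j = 2 ^ Nat.log 2 (k - 2^j)
    · have hp : p j k = 2^j - (k - 2^j) := by
        unfold p; rw [if_neg h0, if_neg h1, if_pos h3]
      rw [hp]
      unfold ff
      rw [if_pos (show 2^j - (k - 2^j) ≤ 2^j by omega), if_neg h1]
      have h2L : 2 ^ (Nat.log 2 (k - 2^j) + 1) = 2 * (k - 2^j) := by
        rw [pow_succ, ← h3]; ring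
      omega
    · have hk2 : 2^j + 2 ≤ k := by
        rcases Nat.lt_or_ge k (2^j + 2) with h | h
        · exfalso
          have he : k - 2^j = 1 := by omega
          rw [he] at h3; simp at h3
        · exact h
      have hp : p j k = k - 1 := by
        unfold p; rw [if_neg h0, if_neg h1, if_neg h3]
      rw [hp]
      unfold ff
      rw [if_neg (show ¬ (k - 1 ≤ 2^j) by omega), if_neg h1]
      have hlog : Nat.log 2 (k - 1 - 2^j) = Nat.log 2 (k - 2^j) := by
        apply Nat.log_eq_of_pow_le_of_lt_pow
        · omega
        · omega
      rw [hlog]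
      have h2L : 2 ^ (Nat.log 2 (k - 2^j) + 1) = 2 * 2 ^ (Nat.log 2 (k - 2^j)) := by
        rw [pow_succ]; ring
      omega

lemma ff_pos {j k : ℕ} (h0 : k ≠ 0) (hn : k < 3 * 2^j) : 0 < ff j k := by
  unfold ff
  split_ifs with h1
  · omega
  · obtain ⟨hA, hB, hC⟩ := pend_facts (by omega) hn
    have h2L : 2 ^ (Nat.log 2 (k - 2^j) + 1) = 2 * 2 ^ (Nat.log 2 (k - 2^j)) := by
      rw [pow_succ]; ring
    omega

lemma gg_drop {j k : ℕ} (h1 : 2^j < k) (hn : k < 3 * 2^j) : gg j (p j k) + 1 = gg j k := by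
  unfold gg p
  obtain ⟨hA, hB, hC⟩ := pend_facts h1 hn
  split_ifs with h2 h3 h4 <;> omega

lemma gg_zero {j k : ℕ} (h : gg j k = 0) : k = 2^j := by
  unfold gg at h; split_ifs at h <;> omega

/-- The level-2 caterpillar tree on `3 * 2^j` vertices. -/
def G (j : ℕ) : SimpleGraph (Fin (3 * 2^j)) where
  Adj a b := (p j a.val = b.val ∨ p j b.val = a.val) ∧ a ≠ b
  symm := by constructor; intro a b h; exact ⟨h.1.symm, h.2.symm⟩
  loopless := by constructor; intro a h; exact h.2 rfl

instance instDecG (j : ℕ) : DecidableRel (G j).Adj :=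
  fun a b => inferInstanceAs (Decidable ((p j a.val = b.val ∨ p j b.val = a.val) ∧ a ≠ b))

lemma npos (j : ℕ) : 0 < 3 * 2^j := by positivity

lemma mlt (j : ℕ) : 2^j < 3 * 2^j := by have := Nat.two_pow_pos j; omega

lemma adj_parent (j : ℕ) {a : Fin (3 * 2^j)} (h : a.val ≠ 0) :
    (G j).Adj a ⟨p j a.val, lt_of_le_of_lt (p_le j a.val) a.isLt⟩ := by
  refine ⟨Or.inl rfl, ?_⟩
  intro he
  have := congrArg Fin.val he
  simp only at this
  have := p_lt j h
  omega

lemma reach_zero (j : ℕ) (a : Fin (3 * 2^j)) :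
    (G j).Reachable a ⟨0, npos j⟩ := by
  obtain ⟨v, hv⟩ := a
  induction v using Nat.strong_induction_on with
  | _ v ih =>
    by_cases h0 : v = 0
    · subst h0; rfl
    · exact ((adj_parent j (a := ⟨v, hv⟩) h0).reachable).trans
        (ih (p j v) (p_lt j h0) (lt_of_le_of_lt (p_le j v) hv))

lemma connected (j : ℕ) : (G j).Connected := by
  rw [connected_iff]
  refine ⟨fun a b => (reach_zero j a).trans (reach_zero j b).symm, ⟨⟨0, npos j⟩⟩⟩

/-- Lipschitz bound along a walk. -/
lemma walk_bound {j : ℕ} (F : ℕ → ℕ)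
    (hF : ∀ a b : Fin (3 * 2^j), (G j).Adj a b → F a.val ≤ F b.val + 1)
    {x y : Fin (3 * 2^j)} (w : (G j).Walk x y) : F x.val ≤ F y.val + w.length := by
  induction w with
  | nil => simp
  | cons h q ih =>
    have := hF _ _ h
    simp only [Walk.length_cons]
    omega

lemma ff_lip (j : ℕ) : ∀ a b : Fin (3 * 2^j), (G j).Adj a b → ff j a.val ≤ ff j b.val + 1 := by
  intro a b h
  rcases h.1 with hp | hp
  · -- b = parent of a
    have ha : a.val ≠ 0 := by
      intro h0
      have : p j a.val = 0 := by rw [h0]; rfl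
      apply h.2; apply Fin.ext; omega
    have := ff_drop (j := j) ha a.isLt
    rw [hp] at this; omega
  · have hb : b.val ≠ 0 := by
      intro h0
      have : p j b.val = 0 := by rw [h0]; rfl
      apply h.2; apply Fin.ext; omega
    have := ff_drop (j := j) hb b.isLt
    rw [hp] at this; omega

lemma gg_lip (j : ℕ) : ∀ a b : Fin (3 * 2^j), (G j).Adj a b → gg j a.val ≤ gg j b.val + 1 := by
  intro a b h
  have key : ∀ c d : Fin (3 * 2^j), p j c.val = d.val → c ≠ d →
      gg j c.val + 1 = gg j d.val ∨ gg j d.val + 1 = gg j c.val := by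
    intro c d hp hne
    have hc0 : c.val ≠ 0 := by
      intro h0
      have : p j c.val = 0 := by rw [h0]; rfl
      apply hne; apply Fin.ext; omega
    by_cases hcm : 2^j < c.val
    · right; have := gg_drop hcm c.isLt; rw [hp] at this; omega
    · -- spine: d = c - 1
      have hpc : p j c.val = c.val - 1 := by
        unfold p; rw [if_neg hc0, if_pos (by omega)]
      left
      rw [hpc] at hp
      unfold gg
      rw [if_pos (show c.val ≤ 2^j by omega), if_pos (show d.val ≤ 2^j by omega)]
      omega
  rcases h.1 with hp | hp
  · rcases key a b hp h.2 with h' | h' <;> omega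
  · rcases key b a hp h.2.symm with h' | h' <;> omega

lemma dist_from_zero (j : ℕ) (k : Fin (3 * 2^j)) :
    (G j).dist ⟨0, npos j⟩ k = ff j k.val := by
  apply le_antisymm
  · -- upper bound by walking down parents
    obtain ⟨v, hv⟩ := k
    induction v using Nat.strong_induction_on with
    | _ v ih =>
      by_cases h0 : v = 0
      · subst h0
        simp [ff, SimpleGraph.dist_self]
      · have hadj := adj_parent j (a := ⟨v, hv⟩) h0
        have htri := (connected j).dist_triangle (u := ⟨0, npos j⟩)
          (v := ⟨p j v, lt_of_le_of_lt (p_le j v) hv⟩) (w := ⟨v, hv⟩)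
        have h1 : (G j).dist ⟨p j v, lt_of_le_of_lt (p_le j v) hv⟩ ⟨v, hv⟩ = 1 := by
          rw [SimpleGraph.dist_eq_one_iff_adj]
          exact hadj.symm
        have h2 := ih (p j v) (p_lt j h0) (lt_of_le_of_lt (p_le j v) hv)
        have h3 := ff_drop (j := j) h0 hv
        simp only [Fin.val_mk] at h2 htri h1 ⊢
        omega
  · obtain ⟨w, hw⟩ := (connected j).exists_walk_length_eq_dist ⟨0, npos j⟩ k
    have := walk_bound (j := j) (ff j) (ff_lip j) w.reverse
    simp only [Walk.length_reverse] at this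
    have hff0 : ff j (0 : ℕ) = 0 := by simp [ff]
    omega

lemma dist_from_mid (j : ℕ) (k : Fin (3 * 2^j)) :
    (G j).dist ⟨2^j, mlt j⟩ k = gg j k.val := by
  apply le_antisymm
  · -- upper bound: strong induction on gg value
    have main : ∀ d : ℕ, ∀ k : Fin (3 * 2^j), gg j k.val = d →
        (G j).dist ⟨2^j, mlt j⟩ k ≤ d := by
      intro d
      induction d using Nat.strong_induction_on with
      | _ d ih =>
        intro k hk
        by_cases hd : d = 0
        · subst hd
          have := gg_zero hk
          have : k = ⟨2^j, mlt j⟩ := by apply Fin.ext; simpa using this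
          rw [this, SimpleGraph.dist_self]
        · by_cases hm : 2^j < k.val
          · -- step to parent
            have hdrop := gg_drop hm k.isLt
            have hadj := adj_parent j (a := k) (by omega)
            have htri := (connected j).dist_triangle (u := ⟨2^j, mlt j⟩)
              (v := ⟨p j k.val, lt_of_le_of_lt (p_le j k.val) k.isLt⟩) (w := k)
            have h1 : (G j).dist ⟨p j k.val, lt_of_le_of_lt (p_le j k.val) k.isLt⟩ k = 1 := by
              rw [SimpleGraph.dist_eq_one_iff_adj]; exact hadj.symm
            have h2 := ih (d - 1) (by omega) ⟨p j k.val, lt_of_le_of_lt (p_le j k.val) k.isLt⟩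
              (by simp only [Fin.val_mk]; rw [hk] at hdrop; omega)
            omega
          · -- spine, k < 2^j: step to child k+1
            have hkm : k.val < 2^j := by
              rcases Nat.lt_or_ge k.val (2^j) with h | h
              · exact h
              · exfalso
                have : k.val = 2^j := by omega
                rw [gg, if_pos (by omega), this] at hk
                omega
            have hklt : k.val + 1 < 3 * 2^j := by have := mlt j; omega
            have hadj : (G j).Adj ⟨k.val + 1, hklt⟩ k := by
              refine ⟨Or.inl ?_, ?_⟩
              · show p j (k.val + 1) = k.val
                unfold p
                rw [if_neg (by omega), if_pos (by omega)]
                omega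
              · intro he; have := congrArg Fin.val he; simp at this
            have htri := (connected j).dist_triangle (u := ⟨2^j, mlt j⟩)
              (v := ⟨k.val + 1, hklt⟩) (w := k)
            have h1 : (G j).dist ⟨k.val + 1, hklt⟩ k = 1 := by
              rw [SimpleGraph.dist_eq_one_iff_adj]; exact hadj
            have hgg1 : gg j (k.val + 1) = d - 1 := by
              rw [gg, if_pos (by omega)]
              rw [gg, if_pos (by omega)] at hk
              omega
            have h2 := ih (d - 1) (by omega) ⟨k.val + 1, hklt⟩ hgg1
            omega
    exact main _ k rfl
  · obtain ⟨w, hw⟩ := (connected j).exists_walk_length_eq_dist ⟨2^j, mlt j⟩ k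
    have := walk_bound (j := j) (gg j) (gg_lip j) w.reverse
    simp only [Walk.length_reverse] at this
    have hggm : gg j (2^j : ℕ) = 0 := by simp [gg]
    omega

-- generic bfsw facts
section generic
variable {V : Type*} [Fintype V] (H : SimpleGraph V)

lemma layerCard_le_card (v : V) (i : ℕ) : layerCard H v i ≤ Fintype.card V := by
  have h := Set.ncard_le_ncard (Set.subset_univ {u : V | H.dist v u = i}) Set.finite_univ
  rw [Set.ncard_univ, Nat.card_eq_fintype_card] at h
  exact h

lemma bddAbove_layer (v : V) : BddAbove (Set.range (layerCard H v)) := by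
  refine ⟨Fintype.card V, ?_⟩
  rintro x ⟨i, rfl⟩
  exact layerCard_le_card H v i

lemma layerCard_le_bfswFrom (v : V) (i : ℕ) : layerCard H v i ≤ bfswFrom H v :=
  le_csSup (bddAbove_layer H v) ⟨i, rfl⟩

lemma bfswFrom_le_card (v : V) : bfswFrom H v ≤ Fintype.card V :=
  csSup_le (Set.range_nonempty _) (by rintro x ⟨i, rfl⟩; exact layerCard_le_card H v i)

lemma bfswFrom_le_bfsw (v : V) : bfswFrom H v ≤ bfsw H :=
  le_csSup ⟨Fintype.card V, by rintro x ⟨u, rfl⟩; exact bfswFrom_le_card H u⟩ ⟨v, rfl⟩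

lemma bfswMin_le (v : V) : bfswMin H ≤ bfswFrom H v := Nat.sInf_le ⟨v, rfl⟩

lemma one_le_bfswMin [Nonempty V] (hc : H.Connected) : 1 ≤ bfswMin H := by
  apply le_csInf (Set.range_nonempty _)
  rintro x ⟨v, rfl⟩
  have h0 : layerCard H v 0 = 1 := by
    rw [layerCard]
    have : {u : V | H.dist v u = 0} = {v} := by
      ext u
      simp [hc.dist_eq_zero_iff, eq_comm]
    rw [this, Set.ncard_singleton]
  calc 1 = layerCard H v 0 := h0.symm
    _ ≤ bfswFrom H v := layerCard_le_bfswFrom H v 0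
end generic

-- the big layer from the bad root
lemma layer_big (j : ℕ) : j + 2 ≤ layerCard (G j) ⟨0, npos j⟩ (2^j) := by
  classical
  set W : Fin (j + 2) → Fin (3 * 2^j) := fun i =>
    if h : i.val ≤ j then ⟨2^j + 2^(i.val+1) - 1, by
      have h1 : (2 : ℕ)^(i.val+1) ≤ 2^(j+1) := Nat.pow_le_pow_right (by norm_num) (by omega)
      have h2 : (1 : ℕ) ≤ 2^(i.val+1) := Nat.one_le_two_pow
      have h3 : (2:ℕ)^(j+1) = 2 * 2^j := by ring
      omega⟩
    else ⟨2^j, mlt j⟩ with hW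
  have hmem : ∀ i : Fin (j+2), W i ∈ {u : Fin (3 * 2^j) | (G j).dist ⟨0, npos j⟩ u = 2^j} := by
    intro i
    simp only [Set.mem_setOf_eq, dist_from_zero]
    by_cases h : i.val ≤ j
    · have h2 : (1 : ℕ) ≤ 2^(i.val+1) := Nat.one_le_two_pow
      have hval : (W i).val = 2^j + 2^(i.val+1) - 1 := by rw [hW]; simp [h]
      rw [hval]
      have hgt : 2^j < 2^j + 2^(i.val+1) - 1 := by
        have : (2:ℕ) ≤ 2^(i.val+1) := by
          calc (2:ℕ) = 2^1 := by norm_num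
          _ ≤ 2^(i.val+1) := Nat.pow_le_pow_right (by norm_num) (by omega)
        omega
      rw [ff, if_neg (by omega)]
      have hsub : 2^j + 2^(i.val+1) - 1 - 2^j = 2^(i.val+1) - 1 := by omega
      rw [hsub]
      have hlog : Nat.log 2 (2^(i.val+1) - 1) = i.val := by
        apply Nat.log_eq_of_pow_le_of_lt_pow
        · have : (2:ℕ)^(i.val+1) = 2 * 2^(i.val) := by ring
          have h1 : (1:ℕ) ≤ 2^(i.val) := Nat.one_le_two_pow
          omega
        · omega
      rw [hlog]
      omega
    · have hval : (W i).val = 2^j := by rw [hW]; simp [h]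
      rw [hval, ff, if_pos le_rfl]
  have hinj : Function.Injective W := by
    intro a b hab
    have hva := congrArg Fin.val hab
    by_cases ha : a.val ≤ j <;> by_cases hb : b.val ≤ j
    · simp only [hW, dif_pos ha, dif_pos hb] at hva
      have h2a : (1 : ℕ) ≤ 2^(a.val+1) := Nat.one_le_two_pow
      have h2b : (1 : ℕ) ≤ 2^(b.val+1) := Nat.one_le_two_pow
      have : (2:ℕ)^(a.val+1) = 2^(b.val+1) := by omega
      have := Nat.pow_right_injective (le_refl 2) this
      exact Fin.ext (by omega)
    · exfalso
      simp only [hW, dif_pos ha, dif_neg hb] at hva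
      have : (2:ℕ) ≤ 2^(a.val+1) := by
        calc (2:ℕ) = 2^1 := by norm_num
        _ ≤ 2^(a.val+1) := Nat.pow_le_pow_right (by norm_num) (by omega)
      omega
    · exfalso
      simp only [hW, dif_neg ha, dif_pos hb] at hva
      have : (2:ℕ) ≤ 2^(b.val+1) := by
        calc (2:ℕ) = 2^1 := by norm_num
        _ ≤ 2^(b.val+1) := Nat.pow_le_pow_right (by norm_num) (by omega)
      omega
    · exact Fin.ext (by omega)
  calc j + 2 = Nat.card (Fin (j+2)) := by simp
    _ = Nat.card (Set.range W) := (Nat.card_range_of_injective hinj).symm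
    _ = (Set.range W).ncard := rfl
    _ ≤ layerCard (G j) ⟨0, npos j⟩ (2^j) := by
        apply Set.ncard_le_ncard _ (Set.toFinite _)
        rintro x ⟨i, rfl⟩
        exact hmem i

-- every layer from the good root has at most 2 vertices
lemma layer_small (j : ℕ) (d : ℕ) : layerCard (G j) ⟨2^j, mlt j⟩ d ≤ 2 := by
  classical
  set A : Fin (3 * 2^j) := ⟨2^j - d, by have := mlt j; omega⟩ with hA
  set B : Fin (3 * 2^j) := if h : 2^j + d - 1 < 3 * 2^j then ⟨2^j + d - 1, h⟩ else A with hB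
  have hsub : {u : Fin (3 * 2^j) | (G j).dist ⟨2^j, mlt j⟩ u = d} ⊆ {A, B} := by
    intro u hu
    simp only [Set.mem_setOf_eq, dist_from_mid] at hu
    by_cases h1 : u.val ≤ 2^j
    · left
      rw [gg, if_pos h1] at hu
      exact Fin.ext (by simp [hA]; omega)
    · right
      rw [gg, if_neg h1] at hu
      have hlt : 2^j + d - 1 < 3 * 2^j := by have := u.isLt; omega
      rw [hB, dif_pos hlt]
      exact Fin.ext (by simp; omega)
  calc layerCard (G j) ⟨2^j, mlt j⟩ d ≤ ({A, B} : Set (Fin (3 * 2^j))).ncard :=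
        Set.ncard_le_ncard hsub (Set.toFinite _)
    _ ≤ 2 := by
        calc ({A, B} : Set (Fin (3 * 2^j))).ncard ≤ ({B} : Set (Fin (3 * 2^j))).ncard + 1 :=
            Set.ncard_insert_le _ _
        _ ≤ 2 := by rw [Set.ncard_singleton]

-- iterates of p only decrease
lemma iter_le (j t u : ℕ) : (p j)^[t] u ≤ u := by
  induction t generalizing u with
  | zero => simp
  | succ t ih =>
    rw [Function.iterate_succ_apply]
    exact le_trans (ih (p j u)) (p_le j u)

/-- key step: every walk from `a` to its parent uses the edge `(a, parent a)`. -/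
lemma walk_mem_edge (j : ℕ) (a b : Fin (3 * 2^j)) (hab : (G j).Adj a b)
    (hp : p j a.val = b.val) : ∀ q : (G j).Walk a b, s(a, b) ∈ q.edges := by
  have ha0 : a.val ≠ 0 := by
    intro h0
    have : p j a.val = 0 := by rw [h0]; rfl
    exact hab.2 (Fin.ext (by omega))
  set S : Set ℕ := {u | ∃ t, (p j)^[t] u = a.val} with hS
  have hbS : b.val ∉ S := by
    rintro ⟨t, ht⟩
    have h1 : (p j)^[t] (p j a.val) = a.val := by rw [hp]; exact ht
    have h2 : (p j)^[t] (p j a.val) ≤ p j a.val := iter_le j t _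
    have h3 : p j a.val < a.val := p_lt j ha0
    omega
  have key : ∀ (x y : Fin (3 * 2^j)) (q : (G j).Walk x y),
      x.val ∈ S → y.val ∉ S → s(a, b) ∈ q.edges := by
    intro x y q
    induction q with
    | nil => intro hx hy; exact absurd hx hy
    | @cons x' z y' hxz q ih =>
      intro hx hy
      by_cases hz : z.val ∈ S
      · exact List.mem_cons_of_mem _ (ih hz hy)
      · -- the edge (x', z) must be the special edge
        have hxa : x' = a ∧ z = b := by
          rcases hxz.1 with h | h
          · -- z is parent of x'
            obtain ⟨t, ht⟩ := hx
            rcases t with _ | t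
            · simp only [Function.iterate_zero, id] at ht
              have hx'a : x' = a := Fin.ext ht
              refine ⟨hx'a, Fin.ext ?_⟩
              rw [← h, ← hp, hx'a]
            · exfalso
              apply hz
              refine ⟨t, ?_⟩
              rw [← h]
              rw [← Function.iterate_succ_apply (p j) t x'.val]
              exact ht
          · -- x' is parent of z: then z ∈ S, contradiction
            exfalso
            apply hz
            obtain ⟨t, ht⟩ := hx
            exact ⟨t + 1, by rw [Function.iterate_succ_apply, h, ht]⟩
        obtain ⟨h1, h2⟩ := hxa
        subst h1; subst h2
        rw [Walk.edges_cons]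
        exact List.mem_cons_self
  intro q
  exact key a b q ⟨0, rfl⟩ hbS

lemma bridge_of_parent (j : ℕ) (a b : Fin (3 * 2^j)) (hab : (G j).Adj a b)
    (hp : p j a.val = b.val) : (G j).IsBridge s(a, b) :=
  isBridge_iff_forall_walk_mem_edges.mpr (walk_mem_edge j a b hab hp)

lemma acyclic (j : ℕ) : (G j).IsAcyclic := by
  rw [isAcyclic_iff_forall_adj_isBridge]
  intro v w h
  rcases h.1 with hp | hp
  · exact bridge_of_parent j v w h hp
  · rw [Sym2.eq_swap]
    exact bridge_of_parent j w v h.symm hp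

lemma maxDeg (j : ℕ) : (G j).maxDegree ≤ 3 := by
  apply SimpleGraph.maxDegree_le_of_forall_degree_le
  intro v
  rw [SimpleGraph.degree]
  set c1 : Fin (3 * 2^j) := ⟨p j v.val, lt_of_le_of_lt (p_le j v.val) v.isLt⟩ with hc1
  set c2 : Fin (3 * 2^j) := if h : v.val + 1 < 3 * 2^j then ⟨v.val + 1, h⟩ else v with hc2
  set c3 : Fin (3 * 2^j) := if h : 2^(j+1) - v.val < 3 * 2^j then ⟨2^(j+1) - v.val, h⟩ else v
    with hc3
  have hsub : (G j).neighborFinset v ⊆ {c1, c2, c3} := by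
    intro u hu
    rw [SimpleGraph.mem_neighborFinset] at hu
    simp only [Finset.mem_insert, Finset.mem_singleton]
    rcases hu.1 with h | h
    · left; exact Fin.ext h.symm
    · -- v is the parent of u; u is a child
      have hu0 : u.val ≠ 0 := by
        intro h0
        have hpz : p j u.val = 0 := by rw [h0]; rfl
        rw [hpz] at h
        apply hu.2.symm
        apply Fin.ext
        rw [h0, ← h]
      by_cases h1 : u.val ≤ 2^j
      · -- spine child: u = v + 1
        have : p j u.val = u.val - 1 := by unfold p; rw [if_neg hu0, if_pos h1]
        right; left
        have hvlt : v.val + 1 < 3 * 2^j := by have := u.isLt; omega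
        rw [hc2, dif_pos hvlt]
        exact Fin.ext (by simp; omega)
      · by_cases h2 : u.val - 2^j = 2 ^ Nat.log 2 (u.val - 2^j)
        · -- pendant bottom: v = 2^j - 2^L, u = 2^j + 2^L
          have hpu : p j u.val = 2^j - (u.val - 2^j) := by
            unfold p; rw [if_neg hu0, if_neg h1, if_pos h2]
          obtain ⟨hA, hB, hC⟩ := pend_facts (by omega) u.isLt
          right; right
          have hval : u.val = 2^(j+1) - v.val := by
            have h2j : (2:ℕ)^(j+1) = 2 * 2^j := by ring
            rw [hpu] at h
            omega
          have hlt : 2^(j+1) - v.val < 3 * 2^j := by rw [← hval]; exact u.isLt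
          rw [hc3, dif_pos hlt]
          exact Fin.ext (by simp [hval])
        · -- pendant interior: u = v + 1
          have : p j u.val = u.val - 1 := by unfold p; rw [if_neg hu0, if_neg h1, if_neg h2]
          right; left
          have hvlt : v.val + 1 < 3 * 2^j := by have := u.isLt; omega
          rw [hc2, dif_pos hvlt]
          exact Fin.ext (by simp; omega)
  calc ((G j).neighborFinset v).card ≤ ({c1, c2, c3} : Finset (Fin (3 * 2^j))).card :=
        Finset.card_le_card hsub
    _ ≤ 3 := by
        apply le_trans (Finset.card_insert_le _ _)
        have : ({c2, c3} : Finset (Fin (3 * 2^j))).card ≤ 2 := by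
          apply le_trans (Finset.card_insert_le _ _)
          simp
        omega

lemma isTree (j : ℕ) (hc : (G j).Connected) : (G j).IsTree := ⟨hc, acyclic j⟩
end BTaux

open BTaux in
/-- For arbitrarily large $n$ there is a binary tree (maximum degree $≤ 3$) on $n$
vertices with bfsw$(T)/$bfsw_min$(T) ≥ (\log_2(n/3) + 2)/2 = Ω(\log n)$. -/
theorem exists_binary_tree_bfsw_ratio (N : ℕ) :
    ∃ (n : ℕ) (T : SimpleGraph (Fin n)) (_ : DecidableRel T.Adj),
      N ≤ n ∧ T.IsTree ∧ T.maxDegree ≤ 3 ∧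
      ((Nat.log 2 (n / 3) : ℚ) + 2) / 2 ≤ (bfsw T : ℚ) / (bfswMin T : ℚ) := by
  refine ⟨3 * 2^N, G N, instDecG N, ?_, isTree N (connected N), maxDeg N, ?_⟩
  · have h1 : N < 2^N := Nat.lt_two_pow_self
    have h2 : (2:ℕ)^N ≤ 3 * 2^N := by omega
    omega
  · -- the ratio bound
    haveI : Nonempty (Fin (3 * 2^N)) := ⟨⟨0, npos N⟩⟩
    have hdiv : 3 * 2^N / 3 = 2^N := Nat.mul_div_cancel_left _ (by norm_num)
    have hlog : Nat.log 2 (3 * 2^N / 3) = N := by rw [hdiv]; exact Nat.log_pow one_lt_two N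
    have hbig : N + 2 ≤ bfsw (G N) :=
      le_trans (layer_big N) (le_trans (layerCard_le_bfswFrom (G N) _ _)
        (bfswFrom_le_bfsw (G N) _))
    have hsmall : bfswFrom (G N) ⟨2^N, mlt N⟩ ≤ 2 := by
      apply csSup_le (Set.range_nonempty _)
      rintro x ⟨d, rfl⟩
      exact layer_small N d
    have hmin2 : bfswMin (G N) ≤ 2 := le_trans (bfswMin_le (G N) _) hsmall
    have hmin1 : 1 ≤ bfswMin (G N) := one_le_bfswMin (G N) (connected N)
    rw [hlog]
    have hm0 : (0:ℚ) < (bfswMin (G N) : ℚ) := by exact_mod_cast hmin1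
    rw [div_le_div_iff₀ (by norm_num) hm0]
    have hb : ((N:ℚ) + 2) ≤ (bfsw (G N) : ℚ) := by exact_mod_cast hbig
    have hm : (bfswMin (G N) : ℚ) ≤ 2 := by exact_mod_cast hmin2
    nlinarith [hb, hm, hm0]
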